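/- Reverse Hölder inequality for the weight ω(x) = |x_d|^α: if -1 < α < 0, 1 < p < ∞ and αp > -1, then there is a constant C = C(d, α, p) such that for every ball B ⊂ ℝ^d, ( (1/|B|)∫_B ω^p dx )^{1/p} ≤ C (1/|B|)∫_B ω dx. -/

import Mathlib

open MeasureTheory Metric Set ENNReal intervalIntegral

lemma coord_dist_le {n : ℕ} (x y : EuclideanSpace ℝ (Fin n)) (i : Fin n) :
    |x i - y i| ≤ dist x y := by
  rw [EuclideanSpace.dist_eq, ← Real.sqrt_sq_eq_abs]
  apply Real.sqrt_le_sqrt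
  calc (x i - y i) ^ 2 = dist (x i) (y i) ^ 2 := by rw [Real.dist_eq, sq_abs]
    _ ≤ ∑ j, dist (x j) (y j) ^ 2 :=
      Finset.single_le_sum (f := fun j => dist (x j) (y j) ^ 2)
        (fun j _ => sq_nonneg _) (Finset.mem_univ i)


lemma absRpow_ii {β : ℝ} (hβ : -1 < β) {R : ℝ} (hR : 0 ≤ R) :
    IntervalIntegrable (fun t => |t| ^ β) volume 0 R := by
  rw [intervalIntegrable_iff, uIoc_of_le hR]
  refine (intervalIntegrable_rpow' hβ (a := 0) (b := R)).1.congr_fun ?_ measurableSet_Ioc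
  intro t ht; simp [abs_of_pos ht.1]

lemma absRpow_ii_neg {β : ℝ} (hβ : -1 < β) {R : ℝ} (hR : 0 ≤ R) :
    IntervalIntegrable (fun t => |t| ^ β) volume (-R) 0 := by
  have h := (IntervalIntegrable.iff_comp_neg (f := fun t => |t| ^ β) (a := 0) (b := -R)).mpr ?_
  · exact h.symm
  · simpa [abs_neg] using absRpow_ii hβ hR

lemma oneD {β R : ℝ} (hβ : -1 < β) (hR : 0 < R) :
    ∫⁻ t in Ioo (-R) R, ENNReal.ofReal (|t| ^ β) =
      ENNReal.ofReal (2 * (R ^ (β + 1) / (β + 1))) := by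
  have hii : IntervalIntegrable (fun t => |t| ^ β) volume (-R) R :=
    (absRpow_ii_neg hβ hR.le).trans (absRpow_ii hβ hR.le)
  have hint : IntegrableOn (fun t => |t| ^ β) (Ioo (-R) R) volume := by
    exact hii.1.mono_set Ioo_subset_Ioc_self
  rw [← ofReal_integral_eq_lintegral_ofReal hint
      (Filter.Eventually.of_forall fun t => Real.rpow_nonneg (abs_nonneg t) β)]
  congr 1
  have h0R : (∫ t in (0:ℝ)..R, |t| ^ β) = R ^ (β + 1) / (β + 1) := by
    rw [intervalIntegral.integral_congr (g := fun t => t ^ β) ?_]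
    · rw [integral_rpow (Or.inl hβ), Real.zero_rpow (by linarith), sub_zero]
    · intro t ht
      rw [uIcc_of_le hR.le] at ht
      simp [abs_of_nonneg ht.1]
  have hneg : (∫ t in (-R)..(0:ℝ), |t| ^ β) = R ^ (β + 1) / (β + 1) := by
    have := intervalIntegral.integral_comp_neg (a := (0:ℝ)) (b := R) (fun t => |t| ^ β)
    simp only [abs_neg, neg_zero] at this
    rw [← this, h0R]
  calc ∫ t in Ioo (-R) R, |t| ^ β = ∫ t in Ioc (-R) R, |t| ^ β :=
        (integral_Ioc_eq_integral_Ioo).symm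
    _ = ∫ t in (-R)..R, |t| ^ β := (intervalIntegral.integral_of_le (by linarith)).symm
    _ = (∫ t in (-R)..(0:ℝ), |t| ^ β) + ∫ t in (0:ℝ)..R, |t| ^ β :=
        (intervalIntegral.integral_add_adjacent_intervals (absRpow_ii_neg hβ hR.le)
          (absRpow_ii hβ hR.le)).symm
    _ = 2 * (R ^ (β + 1) / (β + 1)) := by rw [h0R, hneg]; ring

lemma box_lintegral (d : ℕ) (β : ℝ) (x₀ : EuclideanSpace ℝ (Fin (d+1))) {r : ℝ} (hr : 0 < r) :
    ∫⁻ x in Metric.ball x₀ r, ENNReal.ofReal (|x (Fin.last d)| ^ β) ≤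
      ENNReal.ofReal ((2*r)^d) *
        ∫⁻ t in Ioo (x₀ (Fin.last d) - r) (x₀ (Fin.last d) + r),
          ENNReal.ofReal (|t| ^ β) := by
  set L := Fin.last d with hL
  set u : ℝ → ℝ≥0∞ :=
    (Ioo (x₀ L - r) (x₀ L + r)).indicator (fun t => ENNReal.ofReal (|t| ^ β)) with hu
  set S : Set (Fin d → ℝ) :=
    univ.pi (fun j => Ioo (x₀ (L.succAbove j) - r) (x₀ (L.succAbove j) + r)) with hS
  have hSm : MeasurableSet S := MeasurableSet.univ_pi fun j => measurableSet_Ioo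
  set w : (Fin d → ℝ) → ℝ≥0∞ := S.indicator 1 with hw
  have hum : Measurable u :=
    (by fun_prop : Measurable fun t : ℝ => ENNReal.ofReal (|t| ^ β)).indicator measurableSet_Ioo
  have hwm : Measurable w := measurable_one.indicator hSm
  have key : ∀ x : EuclideanSpace ℝ (Fin (d+1)), (Metric.ball x₀ r).indicator
      (fun x => ENNReal.ofReal (|x L| ^ β)) x ≤ u (x L) * w (fun j => x (L.succAbove j)) := by
    intro x
    rcases em (x ∈ Metric.ball x₀ r) with hx | hx
    · rw [indicator_of_mem hx]
      have hco : ∀ i, |x i - x₀ i| < r := fun i =>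
        lt_of_le_of_lt (coord_dist_le x x₀ i) (mem_ball.mp hx)
      have h1 : x L ∈ Ioo (x₀ L - r) (x₀ L + r) := by
        have h := hco L; rw [abs_sub_lt_iff] at h
        exact ⟨by linarith [h.2], by linarith [h.1]⟩
      have h2 : (fun j => x (L.succAbove j)) ∈ S := by
        intro j _
        have h := hco (L.succAbove j); rw [abs_sub_lt_iff] at h
        exact ⟨by linarith [h.2], by linarith [h.1]⟩
      rw [hu, hw, indicator_of_mem h1, indicator_of_mem h2]
      simp
    · rw [indicator_of_notMem hx]; exact zero_le
  have e1 := EuclideanSpace.volume_preserving_symm_measurableEquiv_toLp (Fin (d+1))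
  have e2 := measurePreserving_piFinSuccAbove (fun _ : Fin (d+1) => (volume : Measure ℝ)) L
  rw [← volume_pi] at e2
  have comp := e2.comp e1
  have hG : Measurable fun z : ℝ × (Fin d → ℝ) => u z.1 * w z.2 :=
    (hum.comp measurable_fst).mul (hwm.comp measurable_snd)
  have hcompeq : ∀ x : EuclideanSpace ℝ (Fin (d+1)),
      ((MeasurableEquiv.piFinSuccAbove (fun _ => ℝ) L) ((MeasurableEquiv.toLp 2 (Fin (d+1) → ℝ)).symm x))
        = (x L, fun j => x (L.succAbove j)) := by
    intro x
    simp only [MeasurableEquiv.piFinSuccAbove, MeasurableEquiv.coe_mk,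
      Equiv.coe_fn_symm_mk, Fin.insertNthEquiv, Equiv.coe_fn_symm_mk]
    rfl
  calc ∫⁻ x in Metric.ball x₀ r, ENNReal.ofReal (|x L| ^ β)
      = ∫⁻ x, (Metric.ball x₀ r).indicator (fun x => ENNReal.ofReal (|x L| ^ β)) x :=
        (lintegral_indicator measurableSet_ball _).symm
    _ ≤ ∫⁻ x, u (x L) * w (fun j => x (L.succAbove j)) := lintegral_mono key
    _ = ∫⁻ z : ℝ × (Fin d → ℝ), u z.1 * w z.2
          ∂((volume : Measure ℝ).prod (Measure.pi fun _ => volume)) := by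
        rw [← comp.lintegral_comp hG]
        refine lintegral_congr fun x => ?_
        rw [Function.comp_apply, hcompeq x]
    _ = (∫⁻ t, u t) * ∫⁻ y, w y ∂(Measure.pi fun _ => (volume : Measure ℝ)) :=
        lintegral_prod_mul hum.aemeasurable hwm.aemeasurable
    _ = (∫⁻ t in Ioo (x₀ L - r) (x₀ L + r), ENNReal.ofReal (|t| ^ β)) * (Measure.pi fun _ => (volume : Measure ℝ)) S := by
        rw [hu, lintegral_indicator measurableSet_Ioo, hw, lintegral_indicator_one hSm]
    _ = (∫⁻ t in Ioo (x₀ L - r) (x₀ L + r), ENNReal.ofReal (|t| ^ β)) * ENNReal.ofReal ((2*r)^d) := by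
        rw [hS, Measure.pi_pi]
        congr 1
        have : ∀ j : Fin d, volume (Ioo (x₀ (L.succAbove j) - r) (x₀ (L.succAbove j) + r))
            = ENNReal.ofReal (2*r) := by
          intro j; rw [Real.volume_Ioo]; congr 1; ring
        rw [Finset.prod_congr rfl (fun j _ => this j), Finset.prod_const,
          ← ENNReal.ofReal_pow (by positivity), Finset.card_univ, Fintype.card_fin]
    _ = ENNReal.ofReal ((2*r)^d) *
          ∫⁻ t in Ioo (x₀ L - r) (x₀ L + r), ENNReal.ofReal (|t| ^ β) := mul_comm _ _

lemma upper_lintegral (d : ℕ) {β : ℝ} (hβ1 : -1 < β) (hβ0 : β < 0) :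
    ∃ K > 0, ∀ (x₀ : EuclideanSpace ℝ (Fin (d+1))) (r : ℝ), 0 < r →
      ∫⁻ x in Metric.ball x₀ r, ENNReal.ofReal (|x (Fin.last d)| ^ β) ≤
        ENNReal.ofReal (K * (max |x₀ (Fin.last d)| r) ^ β) * volume (Metric.ball x₀ r) := by
  set v : ℝ := (volume (Metric.ball (0 : EuclideanSpace ℝ (Fin (d+1))) 1)).toReal with hv
  have hv0 : 0 < v := ENNReal.toReal_pos (measure_ball_pos _ _ one_pos).ne' measure_ball_lt_top.ne
  have hβ1' : 0 < β + 1 := by linarith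
  set Kb : ℝ := 2 ^ (d+1) * 3 ^ (β+1) * 2 ^ (-β) / ((β+1) * v) with hKb
  have hKb0 : 0 < Kb := by positivity
  refine ⟨(2:ℝ) ^ (-β) + Kb, by positivity, fun x₀ r hr => ?_⟩
  set L := Fin.last d
  set c := x₀ L with hc
  set m := max |c| r with hm
  have hm0 : 0 < m := lt_max_of_lt_right hr
  have hballvol : volume (Metric.ball x₀ r) = ENNReal.ofReal (r ^ (d+1) * v) := by
    rw [Measure.addHaar_ball _ _ hr.le, finrank_euclideanSpace_fin,
      ENNReal.ofReal_mul (by positivity), hv, ENNReal.ofReal_toReal measure_ball_lt_top.ne]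
  have hmpow : (0:ℝ) < m ^ β := Real.rpow_pos_of_pos hm0 β
  rcases le_or_gt (2 * r) |c| with h2 | h2
  · -- far case
    have hmc : m = |c| := max_eq_left (by linarith)
    have hpt : ∀ x ∈ Metric.ball x₀ r, ENNReal.ofReal (|x L| ^ β)
        ≤ ENNReal.ofReal ((2:ℝ)^(-β) * m ^ β) := by
      intro x hx
      apply ENNReal.ofReal_le_ofReal
      have hcd : |x L - c| ≤ r := le_of_lt (lt_of_le_of_lt (coord_dist_le x x₀ L) (mem_ball.mp hx))
      have habs : |c| - |x L| ≤ |x L - c| := by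
        rw [abs_sub_comm]; exact abs_sub_abs_le_abs_sub c (x L)
      have h2' : m / 2 ≤ |x L| := by rw [hmc]; linarith
      have hpos : (0:ℝ) < m / 2 := by positivity
      calc |x L| ^ β ≤ (m/2) ^ β := Real.rpow_le_rpow_of_nonpos hpos h2' hβ0.le
        _ = (2:ℝ)^(-β) * m ^ β := by
            rw [Real.div_rpow hm0.le (by norm_num), Real.rpow_neg (by norm_num)]
            ring
    calc ∫⁻ x in Metric.ball x₀ r, ENNReal.ofReal (|x L| ^ β)
        ≤ ∫⁻ _ in Metric.ball x₀ r, ENNReal.ofReal ((2:ℝ)^(-β) * m ^ β) :=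
          setLIntegral_mono (by fun_prop) hpt
      _ = ENNReal.ofReal ((2:ℝ)^(-β) * m ^ β) * volume (Metric.ball x₀ r) := by
          rw [setLIntegral_const]
      _ ≤ _ := by
          gcongr
          nlinarith [mul_nonneg hKb0.le hmpow.le]
  · -- near case
    have hm2r : m ≤ 2 * r := le_of_lt (max_lt h2 (by linarith))
    have hsub : Ioo (c - r) (c + r) ⊆ Ioo (-(3*r)) (3*r) := by
      intro t ht
      obtain ⟨hl, hu2⟩ := abs_lt.mp h2
      exact ⟨by nlinarith [ht.1], by nlinarith [ht.2]⟩
    have hrβ : r ^ β ≤ 2 ^ (-β) * m ^ β := by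
      have h1 : (2*r) ^ β ≤ m ^ β := Real.rpow_le_rpow_of_nonpos hm0 hm2r hβ0.le
      have h2' : (2*r) ^ β = 2 ^ β * r ^ β := Real.mul_rpow (by norm_num) hr.le
      have h3 : (2:ℝ) ^ β * 2 ^ (-β) = 1 := by
        rw [← Real.rpow_add (by norm_num)]; simp
      nlinarith [Real.rpow_pos_of_pos (show (0:ℝ) < 2 by norm_num) (-β),
        Real.rpow_pos_of_pos (show (0:ℝ) < 2 by norm_num) β]
    calc ∫⁻ x in Metric.ball x₀ r, ENNReal.ofReal (|x L| ^ β)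
        ≤ ENNReal.ofReal ((2*r)^d) * ∫⁻ t in Ioo (c - r) (c + r), ENNReal.ofReal (|t| ^ β) :=
          box_lintegral d β x₀ hr
      _ ≤ ENNReal.ofReal ((2*r)^d) * ∫⁻ t in Ioo (-(3*r)) (3*r), ENNReal.ofReal (|t| ^ β) := by
          gcongr
      _ = ENNReal.ofReal ((2*r)^d) * ENNReal.ofReal (2 * ((3*r) ^ (β+1) / (β+1))) := by
          rw [oneD hβ1 (by linarith)]
      _ = ENNReal.ofReal ((2*r)^d * (2 * ((3*r) ^ (β+1) / (β+1)))) := by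
          rw [← ENNReal.ofReal_mul (by positivity)]
      _ ≤ _ := by
          rw [hballvol, ← ENNReal.ofReal_mul (by positivity)]
          apply ENNReal.ofReal_le_ofReal
          have e1 : ((2:ℝ)*r)^d = 2^d * r^d := mul_pow 2 r d
          have e2 : ((3:ℝ)*r) ^ (β+1) = 3 ^ (β+1) * r ^ (β+1) := Real.mul_rpow (by norm_num) hr.le
          have e3 : r ^ (β+1) = r ^ β * r := by
            rw [Real.rpow_add hr, Real.rpow_one]
          calc (2*r)^d * (2 * ((3*r) ^ (β+1) / (β+1)))
              = (2^(d+1) * 3^(β+1) / (β+1)) * (r^d * r * r ^ β) := by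
                rw [e1, e2, e3]; field_simp; ring
            _ ≤ (2^(d+1) * 3^(β+1) / (β+1)) * (r^d * r * (2 ^ (-β) * m ^ β)) := by
                gcongr
            _ = Kb * m ^ β * (r^(d+1) * v) := by
                rw [hKb]; field_simp; ring
            _ ≤ ((2:ℝ)^(-β) + Kb) * m ^ β * (r^(d+1) * v) := by
                have : (0:ℝ) ≤ (2:ℝ)^(-β) * m ^ β * (r^(d+1) * v) := by positivity
                nlinarith

lemma lower_lintegral (d : ℕ) {α : ℝ} (hα1 : -1 < α) (hα2 : α < 0) :
    ∃ K > 0, ∀ (x₀ : EuclideanSpace ℝ (Fin (d+1))) (r : ℝ), 0 < r →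
      ENNReal.ofReal (K * (max |x₀ (Fin.last d)| r) ^ α) * volume (Metric.ball x₀ r) ≤
        ∫⁻ x in Metric.ball x₀ r, ENNReal.ofReal (|x (Fin.last d)| ^ α) := by
  have h8 : (1:ℝ) ≤ 8 ^ (d+1) := one_le_pow₀ (by norm_num)
  refine ⟨3 ^ α / 8 ^ (d+1), by positivity, fun x₀ r hr => ?_⟩
  set L := Fin.last d
  set c := x₀ L with hc
  set m := max |c| r with hm
  have hm0 : 0 < m := lt_max_of_lt_right hr
  have hrm : r ≤ m := le_max_right _ _
  have hmeas : Measurable fun x : EuclideanSpace ℝ (Fin (d+1)) =>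
      ENNReal.ofReal (|x L| ^ α) := by fun_prop
  have hballvol : ∀ (z : EuclideanSpace ℝ (Fin (d+1))) (ρ : ℝ), 0 ≤ ρ →
      volume (Metric.ball z ρ) =
        ENNReal.ofReal (ρ ^ (d+1)) * volume (Metric.ball (0 : EuclideanSpace ℝ (Fin (d+1))) 1) := by
    intro z ρ hρ
    rw [Measure.addHaar_ball _ _ hρ, finrank_euclideanSpace_fin]
  rcases le_or_gt (2 * r) |c| with h2 | h2
  · -- far case
    have hmc : m = |c| := max_eq_left (by linarith)
    have hpt : ∀ x ∈ Metric.ball x₀ r,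
        ENNReal.ofReal ((3/2 : ℝ) ^ α * m ^ α) ≤ ENNReal.ofReal (|x L| ^ α) := by
      intro x hx
      apply ENNReal.ofReal_le_ofReal
      have hcd : |x L - c| ≤ r := le_of_lt (lt_of_le_of_lt (coord_dist_le x x₀ L) (mem_ball.mp hx))
      have hup : |x L| ≤ (3/2) * m := by
        rw [hmc]
        have : |x L| - |c| ≤ |x L - c| := abs_sub_abs_le_abs_sub _ _
        linarith
      have hlow : 0 < |x L| := by
        have : |c| - |x L| ≤ |x L - c| := by
          rw [abs_sub_comm]; exact abs_sub_abs_le_abs_sub c (x L)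
        linarith
      calc (3/2 : ℝ) ^ α * m ^ α = ((3/2) * m) ^ α :=
            (Real.mul_rpow (by norm_num) hm0.le).symm
        _ ≤ |x L| ^ α := Real.rpow_le_rpow_of_nonpos hlow hup hα2.le
    calc ENNReal.ofReal (3 ^ α / 8 ^ (d+1) * m ^ α) * volume (Metric.ball x₀ r)
        ≤ ENNReal.ofReal ((3/2 : ℝ) ^ α * m ^ α) * volume (Metric.ball x₀ r) := by
          gcongr
          have h32 : (3:ℝ) ^ α ≤ (3/2 : ℝ) ^ α :=
            Real.rpow_le_rpow_of_nonpos (by norm_num) (by norm_num) hα2.le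
          have h3pos : (0:ℝ) < 3 ^ α := Real.rpow_pos_of_pos (by norm_num) α
          have : (3:ℝ) ^ α / 8 ^ (d+1) ≤ 3 ^ α := by
            rw [div_le_iff₀ (by positivity)]; nlinarith
          nlinarith [Real.rpow_pos_of_pos hm0 α]
      _ = ∫⁻ _ in Metric.ball x₀ r, ENNReal.ofReal ((3/2 : ℝ) ^ α * m ^ α) := by
          rw [setLIntegral_const]
      _ ≤ ∫⁻ x in Metric.ball x₀ r, ENNReal.ofReal (|x L| ^ α) :=
          setLIntegral_mono hmeas hpt
  · -- near case
    set s : ℝ := if 0 ≤ c then 1 else -1 with hs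
    set y : EuclideanSpace ℝ (Fin (d+1)) :=
      x₀ + (3*r/4) • EuclideanSpace.single L s with hy
    have hyx₀ : dist y x₀ = 3*r/4 := by
      rw [hy, dist_eq_norm, add_sub_cancel_left, norm_smul, EuclideanSpace.norm_single]
      have : ‖s‖ = 1 := by rw [hs]; split_ifs <;> simp
      rw [this]
      simp only [Real.norm_eq_abs, abs_div, abs_mul, mul_one]
      rw [abs_of_pos hr]
      norm_num
    have hyL : y L = c + (3*r/4) * s := by
      rw [hy]
      simp [EuclideanSpace.single_apply]
      exact hc.symm
    have hyLabs : |y L| = |c| + 3*r/4 := by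
      rw [hyL, hs]
      split_ifs with h
      · rw [abs_of_nonneg h, abs_of_nonneg (by linarith)]; ring
      · rw [abs_of_neg (by linarith), abs_of_neg (by nlinarith)]; ring
    have hsubball : Metric.ball y (r/8) ⊆ Metric.ball x₀ r := by
      intro x hx
      rw [mem_ball] at hx ⊢
      calc dist x x₀ ≤ dist x y + dist y x₀ := dist_triangle _ _ _
        _ < r/8 + 3*r/4 := by linarith [hyx₀]
        _ ≤ r := by linarith
    have hpt : ∀ x ∈ Metric.ball y (r/8),
        ENNReal.ofReal ((3:ℝ) ^ α * m ^ α) ≤ ENNReal.ofReal (|x L| ^ α) := by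
      intro x hx
      apply ENNReal.ofReal_le_ofReal
      have hxy : |x L - y L| ≤ r/8 := le_of_lt (lt_of_le_of_lt (coord_dist_le x y L) (mem_ball.mp hx))
      have hlow : 0 < |x L| := by
        have : |y L| - |x L| ≤ |x L - y L| := by
          rw [abs_sub_comm]; exact abs_sub_abs_le_abs_sub _ _
        rw [hyLabs] at this
        have habs : 0 ≤ |c| := abs_nonneg c
        linarith
      have hup : |x L| ≤ 3 * m := by
        have h1 : |x L - c| ≤ dist x x₀ := coord_dist_le x x₀ L
        have h2' : dist x x₀ < r := mem_ball.mp (hsubball hx)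
        have : |x L| - |c| ≤ |x L - c| := abs_sub_abs_le_abs_sub _ _
        have : |x L| < |c| + r := by linarith
        nlinarith
      calc (3:ℝ) ^ α * m ^ α = (3 * m) ^ α := (Real.mul_rpow (by norm_num) hm0.le).symm
        _ ≤ |x L| ^ α := Real.rpow_le_rpow_of_nonpos hlow hup hα2.le
    calc ENNReal.ofReal (3 ^ α / 8 ^ (d+1) * m ^ α) * volume (Metric.ball x₀ r)
        = ENNReal.ofReal ((3:ℝ) ^ α * m ^ α) * volume (Metric.ball y (r/8)) := by
          rw [hballvol x₀ r hr.le, hballvol y (r/8) (by positivity), ← mul_assoc, ← mul_assoc,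
            ← ENNReal.ofReal_mul (by positivity), ← ENNReal.ofReal_mul (by positivity)]
          congr 2
          rw [div_pow]
          field_simp
      _ = ∫⁻ _ in Metric.ball y (r/8), ENNReal.ofReal ((3:ℝ) ^ α * m ^ α) := by
          rw [setLIntegral_const]
      _ ≤ ∫⁻ x in Metric.ball y (r/8), ENNReal.ofReal (|x L| ^ α) :=
          setLIntegral_mono hmeas hpt
      _ ≤ ∫⁻ x in Metric.ball x₀ r, ENNReal.ofReal (|x L| ^ α) :=
          lintegral_mono' (Measure.restrict_mono hsubball le_rfl) le_rfl

/-- Reverse Hölder inequality for `ω(x) = |x_d|^α`: if `-1 < α < 0`, `1 < p`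
and `αp > -1`, then for every ball `B`, `((1/|B|)∫_B ω^p)^{1/p} ≤ C (1/|B|)∫_B ω`
with `C = C(d, α, p)`. -/
theorem stmt5 (d : ℕ) (α p : ℝ) (hα₁ : -1 < α) (hα₂ : α < 0) (hp : 1 < p)
    (hαp : -1 < α * p) :
    ∃ C > 0, ∀ (x₀ : EuclideanSpace ℝ (Fin (d + 1))) (r : ℝ), 0 < r →
      ((∫ x in Metric.ball x₀ r, (|x (Fin.last d)| ^ α) ^ p) /
          (volume (Metric.ball x₀ r)).toReal) ^ (1 / p) ≤
        C * ((∫ x in Metric.ball x₀ r, |x (Fin.last d)| ^ α) /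
          (volume (Metric.ball x₀ r)).toReal) := by
  have hp0 : 0 < p := lt_trans one_pos hp
  have hβ0 : α * p < 0 := mul_neg_of_neg_of_pos hα₂ hp0
  obtain ⟨K₁, hK₁, hup⟩ := upper_lintegral d hαp hβ0
  obtain ⟨K₃, hK₃, hupα⟩ := upper_lintegral d hα₁ hα₂
  obtain ⟨K₂, hK₂, hlow⟩ := lower_lintegral d hα₁ hα₂
  refine ⟨K₁ ^ (1/p) / K₂, by positivity, fun x₀ r hr => ?_⟩
  set L := Fin.last d with hL
  set B := Metric.ball x₀ r with hB
  set m := max |x₀ L| r with hm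
  have hm0 : 0 < m := lt_max_of_lt_right hr
  have hV0 : 0 < (volume B).toReal :=
    ENNReal.toReal_pos (measure_ball_pos _ _ hr).ne' measure_ball_lt_top.ne
  set V := (volume B).toReal with hV
  have heqint : ∀ γ : ℝ, ∫ x in B, |x L| ^ γ =
      (∫⁻ x in B, ENNReal.ofReal (|x L| ^ γ)).toReal := by
    intro γ
    rw [integral_eq_lintegral_of_nonneg_ae
      (Filter.Eventually.of_forall fun x => Real.rpow_nonneg (abs_nonneg _) γ)
      ((by fun_prop : Measurable fun x : EuclideanSpace ℝ (Fin (d+1)) =>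
        |x L| ^ γ).aestronglyMeasurable)]
  have hupper : ∫ x in B, (|x L| ^ α) ^ p ≤ K₁ * m ^ (α*p) * V := by
    have hrw : (fun x : EuclideanSpace ℝ (Fin (d+1)) => (|x L| ^ α) ^ p) =
        fun x => |x L| ^ (α*p) :=
      funext fun x => (Real.rpow_mul (abs_nonneg _) α p).symm
    rw [hrw, heqint (α*p)]
    calc (∫⁻ x in B, ENNReal.ofReal (|x L| ^ (α*p))).toReal
        ≤ (ENNReal.ofReal (K₁ * m ^ (α*p)) * volume B).toReal :=
          ENNReal.toReal_mono
            (ENNReal.mul_ne_top ENNReal.ofReal_ne_top measure_ball_lt_top.ne)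
            (hup x₀ r hr)
      _ = K₁ * m ^ (α*p) * V := by
          rw [ENNReal.toReal_mul, ENNReal.toReal_ofReal (by positivity)]
  have hlower : K₂ * m ^ α * V ≤ ∫ x in B, |x L| ^ α := by
    rw [heqint α]
    have hfin : ∫⁻ x in B, ENNReal.ofReal (|x L| ^ α) ≠ ⊤ :=
      ne_top_of_le_ne_top
        (ENNReal.mul_ne_top ENNReal.ofReal_ne_top measure_ball_lt_top.ne) (hupα x₀ r hr)
    calc K₂ * m ^ α * V = (ENNReal.ofReal (K₂ * m ^ α) * volume B).toReal := by
          rw [ENNReal.toReal_mul, ENNReal.toReal_ofReal (by positivity)]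
      _ ≤ _ := ENNReal.toReal_mono hfin (hlow x₀ r hr)
  have hIntNN : 0 ≤ ∫ x in B, (|x L| ^ α) ^ p :=
    integral_nonneg fun x => Real.rpow_nonneg (Real.rpow_nonneg (abs_nonneg _) _) _
  calc ((∫ x in B, (|x L| ^ α) ^ p) / V) ^ (1/p)
      ≤ ((K₁ * m ^ (α*p) * V) / V) ^ (1/p) := by
        apply Real.rpow_le_rpow (div_nonneg hIntNN hV0.le) _ (by positivity)
        gcongr
    _ = (K₁ * m ^ (α*p)) ^ (1/p) := by
        rw [mul_div_assoc, div_self hV0.ne', mul_one]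
    _ = K₁ ^ (1/p) * m ^ α := by
        rw [Real.mul_rpow hK₁.le (Real.rpow_nonneg hm0.le _), ← Real.rpow_mul hm0.le]
        congr 1
        field_simp
    _ = (K₁ ^ (1/p) / K₂) * (K₂ * m ^ α) := by field_simp
    _ ≤ (K₁ ^ (1/p) / K₂) * ((∫ x in B, |x L| ^ α) / V) := by
        apply mul_le_mul_of_nonneg_left _ (by positivity)
        exact (le_div_iff₀ hV0).mpr hlower
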